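/- arXiv:2402.12547 — 2 statements merged into one kernel-verified Lean document; each statement's English description precedes it below -/
import Mathlib

section
/- The holomorph Hol(Z/4Z × Z/8Z) contains no element of order 16. -/
/-- The multiplicative group structure on `AddAut A` (composition), as in the older Mathlib. -/
instance AddAut.group (A : Type*) [Add A] : Group (AddAut A) where
  mul g h := AddEquiv.trans h g
  one := AddEquiv.refl _
  inv := AddEquiv.symm
  mul_assoc _ _ _ := rfl
  one_mul _ := rfl
  mul_one _ := rfl
  inv_mul_cancel := AddEquiv.self_trans_symm

/-- The natural action of `AddAut N` on `Multiplicative N`. -/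
def holPhi (N : Type) [AddCommGroup N] : AddAut N →* MulAut (Multiplicative N) where
  toFun f := AddEquiv.toMultiplicative f
  map_one' := by ext x; rfl
  map_mul' f g := by ext x; rfl

/-- The holomorph of an abelian group `N`, i.e. the semidirect product `N ⋊ Aut(N)`. -/
abbrev Hol (N : Type) [AddCommGroup N] :=
  SemidirectProduct (Multiplicative N) (AddAut N) (holPhi N)

/-- The action of the holomorph on `N`: `(v, A) • x = v + A x`. -/
def holSmul {N : Type} [AddCommGroup N] (g : Hol N) (x : N) : N :=
  (Multiplicative.toAdd g.left) + g.right x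

/-- A subgroup of `Hol N` is regular if its action on `N` is simply transitive. -/
def IsRegularSubgroup {N : Type} [AddCommGroup N] (G : Subgroup (Hol N)) : Prop :=
  ∀ x y : N, ∃! g : G, holSmul (g : Hol N) x = y

namespace HolC4C8Aux

abbrev Nn := ZMod 4 × ZMod 8

def mulVec (a b w : Nn) : Nn := w.1.val • a + w.2.val • b

def sumIter (a b v : Nn) : Nn :=
  v + mulVec a b (v + mulVec a b (v + mulVec a b (v + mulVec a b (v + mulVec a b
    (v + mulVec a b (v + mulVec a b v))))))

def iter8 (a b v : Nn) : Nn :=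
  mulVec a b (mulVec a b (mulVec a b (mulVec a b (mulVec a b (mulVec a b
    (mulVec a b (mulVec a b v)))))))

set_option synthInstance.maxHeartbeats 1000000 in
set_option synthInstance.maxSize 4096 in
set_option maxHeartbeats 8000000 in
set_option maxRecDepth 10000 in
lemma key : ∀ a b : Nn, 4 • a = 0 → 4 • b ≠ 0 → (∀ u : Nn, 2 • u ≠ a) →
    sumIter a b (1, 0) = 0 ∧ sumIter a b (0, 1) = 0 ∧
      iter8 a b (1, 0) = (1, 0) ∧ iter8 a b (0, 1) = (0, 1) := by decide

lemma decomp (v : Nn) :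
    v = v.1.val • ((1 : ZMod 4), (0 : ZMod 8)) + v.2.val • ((0 : ZMod 4), (1 : ZMod 8)) := by
  ext <;> simp [ZMod.natCast_val, ZMod.cast_id]

lemma lin (A : AddAut Nn) (v : Nn) : A v = mulVec (A (1, 0)) (A (0, 1)) v := by
  conv_lhs => rw [decomp v]
  rw [map_add, map_nsmul, map_nsmul]; rfl

lemma main (A : AddAut Nn) (v : Nn) :
    (v + A (v + A (v + A (v + A (v + A (v + A (v + A v))))))) = 0 ∧
      ∀ w : Nn, A (A (A (A (A (A (A (A w))))))) = w := by
  set a := A (1, 0) with ha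
  set b := A (0, 1) with hb
  have h1 : 4 • a = 0 := by
    rw [ha, ← map_nsmul]
    have : (4 : ℕ) • ((1 : ZMod 4), (0 : ZMod 8)) = 0 := by decide
    rw [this, map_zero]
  have h2 : 4 • b ≠ 0 := by
    intro h
    have h' : A (4 • ((0 : ZMod 4), (1 : ZMod 8))) = A 0 := by
      rw [map_nsmul, map_zero, ← hb, h]
    have := A.injective h'
    revert this; decide
  have h3 : ∀ u : Nn, 2 • u ≠ a := by
    intro u h
    have h' : A.symm (2 • u) = A.symm a := by rw [h]
    rw [map_nsmul, ha, AddEquiv.symm_apply_apply] at h'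
    have hw : ∀ w : Nn, 2 • w ≠ ((1 : ZMod 4), (0 : ZMod 8)) := by decide
    exact hw _ h' 
  obtain ⟨k1, k2, k3, k4⟩ := key a b h1 h2 h3
  -- build the relevant additive monoid homs
  let T : Nn →+ Nn := A.toAddMonoidHom
  let S : Nn →+ Nn :=
    .id Nn + T.comp (.id Nn + T.comp (.id Nn + T.comp (.id Nn + T.comp (.id Nn + T.comp
      (.id Nn + T.comp (.id Nn + T.comp (.id Nn)))))))
  let P : Nn →+ Nn :=
    T.comp (T.comp (T.comp (T.comp (T.comp (T.comp (T.comp T))))))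
  have hS : ∀ w : Nn, S w = w + A (w + A (w + A (w + A (w + A (w + A (w + A w)))))) :=
    fun w => rfl
  have hP : ∀ w : Nn, P w = A (A (A (A (A (A (A (A w))))))) := fun w => rfl
  have hSv : ∀ w : Nn, sumIter a b w = S w := by
    intro w
    rw [hS, sumIter]
    simp only [ha, hb, ← lin A]
  have hPv : ∀ w : Nn, iter8 a b w = P w := by
    intro w
    rw [hP, iter8]
    simp only [ha, hb, ← lin A]
  constructor
  · rw [← hS]
    conv_lhs => rw [decomp v]
    rw [map_add, map_nsmul, map_nsmul, ← hSv, ← hSv, k1, k2]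
    simp
  · intro w
    rw [← hP]
    conv_lhs => rw [decomp w]
    rw [map_add, map_nsmul, map_nsmul, ← hPv, ← hPv, k3, k4, ← decomp]

end HolC4C8Aux

/-- Lemma 7.1: the holomorph of `C₄ × C₈` has no element of order `16`. -/
theorem no_element_of_order_sixteen_in_hol_C4_x_C8 (g : Hol (ZMod 4 × ZMod 8)) :
    orderOf g ≠ 16 := by
  intro h16
  have h8 : g ^ 8 = 1 := by
    have hexp : g ^ 8 = g * (g * (g * (g * (g * (g * (g * g)))))) := by
      show g ^ (((((((1 + 1) + 1) + 1) + 1) + 1) + 1) + 1) = _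
      simp only [pow_succ', pow_zero, mul_one]
    set A := g.right with hA
    set v := Multiplicative.toAdd g.left with hv
    obtain ⟨hsum, hit⟩ := HolC4C8Aux.main A v
    refine SemidirectProduct.ext ?_ ?_
    · show (g ^ 8).left = 1
      rw [hexp]
      simp only [SemidirectProduct.mul_left]
      have hphi : ∀ x : Multiplicative (ZMod 4 × ZMod 8),
          Multiplicative.toAdd (holPhi _ A x) = A (Multiplicative.toAdd x) := fun x => rfl
      refine Multiplicative.toAdd.injective ?_
      simp only [toAdd_mul, hphi, toAdd_one, ← hv, ← hA]
      exact hsum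
    · show (g ^ 8).right = 1
      rw [hexp]
      simp only [SemidirectProduct.mul_right]
      refine AddEquiv.ext fun x => ?_
      simp only [AddAut.mul_apply, ← hA]
      exact hit x
  have := orderOf_dvd_of_pow_eq_one h8
  rw [h16] at this
  norm_num at this
end

section
/- Let n ≥ 5 be an integer and let N = Z/2Z × Z/2Z × Z/2^{n-2}Z. Then Hol(N) contains no regular subgroup isomorphic to the generalised quaternion group Q_{2^n} (QuaternionGroup 2^{n-2}) and no regular subgroup isomorphic to the dihedral group D_{2^n} (DihedralGroup 2^{n-1}). -/
namespace Prop81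

/-- The group `C₂ × C₂ × C_{2^m}`. -/
abbrev Nm (m : ℕ) : Type := ZMod 2 × ZMod 2 × ZMod (2 ^ m)

/-- The elementary abelian group `C₂³`. -/
abbrev V2 : Type := ZMod 2 × ZMod 2 × ZMod 2

lemma z2_add_self (a : ZMod 2) : a + a = 0 := by
  have h : ∀ b : ZMod 2, b + b = 0 := by decide
  exact h a

lemma v2_add_self (v : V2) : v + v = 0 := by
  obtain ⟨a, b, c⟩ := v
  simp [Prod.ext_iff, z2_add_self]

variable {m : ℕ}

lemma autMul {A : Type} [Add A] (f g : AddAut A) (x : A) : (f * g) x = f (g x) := rfl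

@[simp]
lemma autOne {A : Type} [Add A] (x : A) : (1 : AddAut A) x = x := rfl

lemma two_pow_eq_zero : ((2 : ZMod (2 ^ m))) ^ m = 0 := by
  have h : ((2 ^ m : ℕ) : ZMod (2 ^ m)) = 0 := ZMod.natCast_self _
  push_cast at h
  exact h

lemma endMul (f g : AddMonoid.End V2) (v : V2) : (f * g) v = f (g v) := rfl

lemma add_third (a b : ZMod (2 ^ m)) :
    ((((0 : ZMod 2), (0 : ZMod 2), a) : Nm m)) + ((0, 0, b) : Nm m) = (0, 0, a + b) := by
  simp [Prod.ext_iff]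

lemma double_eq (x : Nm m) : x + x = (0, 0, 2 * x.2.2) := by
  obtain ⟨a, b, c⟩ := x
  simp [Prod.ext_iff, z2_add_self, two_mul]

/-- The scalar by which an automorphism acts on the cyclic subgroup `2N`. -/
def gam (A : AddAut (Nm m)) : ZMod (2 ^ m) := (A (0, 0, 1)).2.2

lemma hom_eq_mul (f : ZMod (2 ^ m) →+ ZMod (2 ^ m)) (t : ZMod (2 ^ m)) : f t = t * f 1 := by
  have h : (t.val • (1 : ZMod (2 ^ m))) = t := by
    rw [nsmul_eq_mul, mul_one, ZMod.natCast_zmod_val]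
  calc f t = f (t.val • 1) := by rw [h]
    _ = t.val • f 1 := map_nsmul f _ _
    _ = (t.val : ZMod (2 ^ m)) * f 1 := by rw [nsmul_eq_mul]
    _ = t * f 1 := by rw [ZMod.natCast_zmod_val]

lemma apply_D (A : AddAut (Nm m)) (t : ZMod (2 ^ m)) :
    A ((0, 0, 2 * t) : Nm m) = (0, 0, 2 * (t * gam A)) := by
  have h1 : ((0, 0, 2 * t) : Nm m) = (0, 0, t) + (0, 0, t) := by
    simp [Prod.ext_iff, two_mul]
  rw [h1, map_add, double_eq]
  have hf : ∀ s : ZMod (2 ^ m), (A ((0, 0, s) : Nm m)).2.2 = s * gam A := by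
    intro s
    let f : ZMod (2 ^ m) →+ ZMod (2 ^ m) :=
      ((AddMonoidHom.snd (ZMod 2) (ZMod (2 ^ m))).comp
        ((AddMonoidHom.snd (ZMod 2) (ZMod 2 × ZMod (2 ^ m))).comp
          (A.toAddMonoidHom.comp
            ((AddMonoidHom.inr (ZMod 2) (ZMod 2 × ZMod (2 ^ m))).comp
              (AddMonoidHom.inr (ZMod 2) (ZMod (2 ^ m)))))))
    have : f s = s * f 1 := hom_eq_mul f s
    exact this
  rw [hf]

lemma pow_apply_D (A : AddAut (Nm m)) :
    ∀ (i : ℕ) (t : ZMod (2 ^ m)),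
      (A ^ i) ((0, 0, 2 * t) : Nm m) = (0, 0, 2 * (t * gam A ^ i)) := by
  intro i
  induction i with
  | zero => intro t; simp
  | succ i ih =>
    intro t
    rw [pow_succ, autMul, apply_D, ih]
    simp only [Prod.mk.injEq, true_and]
    ring

lemma gam_odd (hm : 3 ≤ m) (A : AddAut (Nm m)) : ∃ δ, gam A = 2 * δ + 1 := by
  rcases Nat.even_or_odd (gam A).val with ⟨j, hj⟩ | ⟨j, hj⟩
  · exfalso
    have hg : gam A = 2 * (j : ZMod (2 ^ m)) := by
      have h := (ZMod.natCast_zmod_val (gam A)).symm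
      rw [h, hj]; push_cast; ring
    have h4 : (2 : ZMod (2 ^ m)) ^ (m - 2) * 4 = 0 := by
      have h1 : (2 : ZMod (2 ^ m)) ^ ((m - 2) + 2) = 2 ^ m := by congr 1; omega
      have h2 := two_pow_eq_zero (m := m)
      rw [← h1, pow_add] at h2
      norm_num at h2
      exact h2
    have h1 : A ((0, 0, 2 * ((2 : ZMod (2 ^ m)) ^ (m - 2))) : Nm m) = 0 := by
      rw [apply_D, hg]
      have : ((0 : ZMod 2), (0 : ZMod 2),
          2 * ((2 : ZMod (2 ^ m)) ^ (m - 2) * (2 * (j : ZMod (2 ^ m))))) = ((0, 0, 0) : Nm m) := by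
        simp only [Prod.mk.injEq, true_and]
        linear_combination (j : ZMod (2 ^ m)) * h4
      rw [this]
      rfl
    have h0 : ((0, 0, 2 * ((2 : ZMod (2 ^ m)) ^ (m - 2))) : Nm m) = 0 :=
      A.injective (by rw [h1, map_zero])
    have h3 : (2 : ZMod (2 ^ m)) * 2 ^ (m - 2) = 0 := congrArg (fun x : Nm m => x.2.2) h0
    have h5 : ((2 ^ (m - 1) : ℕ) : ZMod (2 ^ m)) = 0 := by
      push_cast
      have h6 : (2 : ZMod (2 ^ m)) ^ (1 + (m - 2)) = 2 ^ (m - 1) := by congr 1; omega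
      rw [← h6, pow_add, pow_one]
      exact h3
    rw [ZMod.natCast_eq_zero_iff] at h5
    have hle := Nat.le_of_dvd (Nat.pow_pos (by norm_num : 0 < 2)) h5
    have hlt : (2 : ℕ) ^ (m - 1) < 2 ^ m := Nat.pow_lt_pow_right (by norm_num) (by omega)
    omega
  · refine ⟨(j : ZMod (2 ^ m)), ?_⟩
    have h := (ZMod.natCast_zmod_val (gam A)).symm
    rw [h, hj]; push_cast; ring

lemma odd_pow {γ : ZMod (2 ^ m)} (h : ∃ δ, γ = 2 * δ + 1) (s : ℕ) :
    ∃ δ, γ ^ s = 2 * δ + 1 := by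
  obtain ⟨δ, hδ⟩ := h
  induction s with
  | zero => exact ⟨0, by ring⟩
  | succ s ih =>
    obtain ⟨ε, hε⟩ := ih
    exact ⟨2 * ε * δ + ε + δ, by rw [pow_succ, hε, hδ]; ring⟩

/-- Reduction mod 2. -/
def pV (hm : 3 ≤ m) : Nm m →+ V2 where
  toFun x := (x.1, x.2.1, ZMod.castHom (dvd_pow_self 2 (by omega : m ≠ 0)) (ZMod 2) x.2.2)
  map_zero' := by simp
  map_add' a b := by
    refine Prod.ext rfl (Prod.ext rfl ?_)
    exact map_add _ _ _

/-- A set-theoretic section of `pV`. -/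
def lV (m : ℕ) : V2 → Nm m := fun v => (v.1, v.2.1, (v.2.2.val : ZMod (2 ^ m)))

lemma pV_eq_zero (hm : 3 ≤ m) {x : Nm m} (h : pV hm x = 0) :
    ∃ t, x = ((0 : ZMod 2), (0 : ZMod 2), 2 * t) := by
  obtain ⟨a, b, c⟩ := x
  simp only [pV, AddMonoidHom.coe_mk, ZeroHom.coe_mk, Prod.ext_iff, ZMod.castHom_apply] at h
  obtain ⟨ha, hb, hc⟩ := h
  have hv : ((c.val : ℕ) : ZMod 2) = 0 := by rw [ZMod.natCast_val]; exact hc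
  rw [ZMod.natCast_eq_zero_iff] at hv
  obtain ⟨j, hj⟩ := hv
  refine ⟨(j : ZMod (2 ^ m)), ?_⟩
  simp only [Prod.mk.injEq]
  refine ⟨ha, hb, ?_⟩
  rw [← ZMod.natCast_zmod_val c, hj]; push_cast; ring

lemma pV_double (hm : 3 ≤ m) (t : ZMod (2 ^ m)) :
    pV hm ((0, 0, 2 * t) : Nm m) = 0 := by
  refine Prod.ext rfl (Prod.ext rfl ?_)
  show (ZMod.castHom (dvd_pow_self 2 (by omega : m ≠ 0)) (ZMod 2)) (2 * t) = 0
  rw [map_mul]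
  have h : (ZMod.castHom (dvd_pow_self 2 (by omega : m ≠ 0)) (ZMod 2)) (2 : ZMod (2 ^ m)) = 0 := by
    have h2 : ((2 : ℕ) : ZMod (2 ^ m)) = (2 : ZMod (2 ^ m)) := by push_cast; ring
    rw [← h2, map_natCast]
    decide
  rw [h, zero_mul]

lemma pV_lV (hm : 3 ≤ m) (v : V2) : pV hm (lV m v) = v := by
  obtain ⟨a, b, c⟩ := v
  simp only [pV, lV, AddMonoidHom.coe_mk, ZeroHom.coe_mk, Prod.mk.injEq, ZMod.castHom_apply,
    true_and]
  rw [← ZMod.natCast_val, ZMod.val_natCast]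
  rw [Nat.mod_eq_of_lt (lt_of_lt_of_le (ZMod.val_lt c) (by
    calc (2 : ℕ) = 2 ^ 1 := rfl
    _ ≤ 2 ^ m := Nat.pow_le_pow_right (by omega) (by omega)))]
  exact ZMod.natCast_zmod_val c

/-- The induced automorphism of `N/2N ≅ C₂³`. -/
def Abar (hm : 3 ≤ m) (A : AddAut (Nm m)) : AddMonoid.End V2 where
  toFun v := pV hm (A (lV m v))
  map_zero' := by
    show pV hm (A (lV m 0)) = 0
    have h : lV m (0 : V2) = 0 := by
      simp [lV, Prod.ext_iff]
    rw [h, map_zero, map_zero]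
  map_add' v w := by
    have hd : pV hm (lV m (v + w) - (lV m v + lV m w)) = 0 := by
      rw [map_sub, map_add, pV_lV, pV_lV, pV_lV, sub_self]
    obtain ⟨t, ht⟩ := pV_eq_zero hm hd
    have hlv : lV m (v + w) = lV m v + lV m w + ((0 : ZMod 2), (0 : ZMod 2), 2 * t) := by
      rw [← ht]; abel
    show pV hm (A (lV m (v + w))) = pV hm (A (lV m v)) + pV hm (A (lV m w))
    rw [hlv, map_add A (lV m v + lV m w) ((0, 0, 2 * t) : Nm m), map_add A (lV m v) (lV m w),
      map_add (pV hm) (A (lV m v) + A (lV m w)) (A ((0, 0, 2 * t) : Nm m)),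
      map_add (pV hm) (A (lV m v)) (A (lV m w)), apply_D, pV_double, add_zero]

lemma Abar_apply (hm : 3 ≤ m) (A : AddAut (Nm m)) (v : V2) :
    Abar hm A v = pV hm (A (lV m v)) := rfl

lemma pV_comm (hm : 3 ≤ m) (A : AddAut (Nm m)) (x : Nm m) :
    pV hm (A x) = Abar hm A (pV hm x) := by
  have hd : pV hm (lV m (pV hm x) - x) = 0 := by rw [map_sub, pV_lV, sub_self]
  obtain ⟨t, ht⟩ := pV_eq_zero hm hd
  have hl : lV m (pV hm x) = x + ((0 : ZMod 2), (0 : ZMod 2), 2 * t) := by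
    rw [← ht]; abel
  rw [Abar_apply, hl, map_add, apply_D, map_add, pV_double, add_zero]

lemma pV_comm_pow (hm : 3 ≤ m) (A : AddAut (Nm m)) :
    ∀ (k : ℕ) (x : Nm m), pV hm ((A ^ k) x) = ((Abar hm A) ^ k) (pV hm x) := by
  intro k
  induction k with
  | zero => intro x; simp
  | succ k ih =>
    intro x
    rw [pow_succ, autMul, ih (A x), pV_comm, pow_succ, endMul]

lemma Abar_id (hm : 3 ≤ m) (A : AddAut (Nm m)) (hA : A ^ (2 ^ (m + 1)) = 1) (v : V2) :
    ((Abar hm A) ^ (2 ^ (m + 1))) v = v := by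
  have h := pV_comm_pow hm A (2 ^ (m + 1)) (lV m v)
  rw [hA] at h
  simp only [autOne] at h
  rw [pV_lV] at h
  exact h.symm

/-- `A - 1` on `N/2N` (using that `-1 = +1` in characteristic two). -/
def tauE (hm : 3 ≤ m) (A : AddAut (Nm m)) : AddMonoid.End V2 := Abar hm A + 1

lemma tau_pow (hm : 3 ≤ m) (A : AddAut (Nm m)) :
    ∀ (k : ℕ) (v : V2),
      ((Abar hm A) ^ (2 ^ k)) v = v + ((tauE hm A) ^ (2 ^ k)) v := by
  intro k
  induction k with
  | zero =>
    intro v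
    simp only [pow_zero, pow_one]
    have h0 : (tauE hm A) v = (Abar hm A) v + v := by
      show (Abar hm A + 1) v = _
      rfl
    rw [h0, add_comm ((Abar hm A) v) v, ← add_assoc, v2_add_self, zero_add]
  | succ k ih =>
    intro v
    have h2 : (2 : ℕ) ^ (k + 1) = 2 ^ k + 2 ^ k := by rw [pow_succ, Nat.mul_two]
    rw [h2, pow_add, endMul, pow_add, endMul]
    rw [ih, ih, map_add]
    set a := ((tauE hm A) ^ (2 ^ k)) v
    calc (v + a) + (a + ((tauE hm A) ^ (2 ^ k)) a)
        = v + ((a + a) + ((tauE hm A) ^ (2 ^ k)) a) := by abel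
      _ = v + ((tauE hm A) ^ (2 ^ k)) a := by rw [v2_add_self, zero_add]

lemma sc_inj {Y : V2} (hY : Y ≠ 0) {a b : ZMod 2} (h : a.val • Y = b.val • Y) : a = b := by
  have ha := ZMod.val_lt a
  have hb := ZMod.val_lt b
  have hva : a.val = 0 ∨ a.val = 1 := by omega
  have hvb : b.val = 0 ∨ b.val = 1 := by omega
  have goal : a.val = b.val := by
    rcases hva with h1 | h1 <;> rcases hvb with h2 | h2 <;> rw [h1, h2] at h ⊢ <;>
      first
        | rfl
        | (exfalso; apply hY; simpa using h)
        | (exfalso; apply hY; simpa using h.symm)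
  rw [← ZMod.natCast_zmod_val a, ← ZMod.natCast_zmod_val b, goal]

lemma tau_cube_zero (τ : AddMonoid.End V2) (K : ℕ) (hK : ∀ v, (τ ^ K) v = 0) :
    ∀ v, (τ ^ 3) v = 0 := by
  by_contra hcon
  push_neg at hcon
  obtain ⟨v, hv⟩ := hcon
  have hex : ∃ j, (τ ^ j) v = 0 := ⟨K, hK v⟩
  have hmono : ∀ j, (τ ^ j) v = 0 → (τ ^ (j + 1)) v = 0 := by
    intro j hj
    rw [pow_succ', endMul, hj, map_zero]
  have h4 : 4 ≤ Nat.find hex := by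
    by_contra h4
    push_neg at h4
    have h3 : (τ ^ 3) v = 0 := by
      have hbase := Nat.find_spec hex
      obtain ⟨d, hd⟩ : ∃ d, 3 = Nat.find hex + d := ⟨3 - Nat.find hex, by omega⟩
      rw [hd]
      clear hd hv
      induction d with
      | zero => simpa using hbase
      | succ d ihd => exact hmono _ ihd
    exact hv h3
  set k := Nat.find hex - 1 with hkdef
  have hks : Nat.find hex = k + 1 := by omega
  have hk3 : 3 ≤ k := by omega
  have hkz : (τ ^ (k + 1)) v = 0 := by rw [← hks]; exact Nat.find_spec hex
  have hknz : (τ ^ k) v ≠ 0 := Nat.find_min hex (by omega)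
  have tpow : ∀ (a b : ℕ), (τ ^ a) ((τ ^ b) v) = (τ ^ (a + b)) v := by
    intro a b; rw [pow_add, endMul]
  have hzero : ∀ j, k + 1 ≤ j → (τ ^ j) v = 0 := by
    intro j hj
    have hd : j = (j - (k + 1)) + (k + 1) := by omega
    rw [hd, pow_add, endMul, hkz, map_zero]
  set Y := (τ ^ k) v with hYdef
  set w0 := (τ ^ (k - 3)) v with hw0
  set w1 := (τ ^ (k - 2)) v with hw1
  set w2 := (τ ^ (k - 1)) v with hw2
  have t3w0 : (τ ^ 3) w0 = Y := by rw [hw0, tpow, show 3 + (k - 3) = k from by omega]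
  have t3w1 : (τ ^ 3) w1 = 0 := by rw [hw1, tpow]; exact hzero _ (by omega)
  have t3w2 : (τ ^ 3) w2 = 0 := by rw [hw2, tpow]; exact hzero _ (by omega)
  have t3Y : (τ ^ 3) Y = 0 := by rw [hYdef, tpow]; exact hzero _ (by omega)
  have t2w1 : (τ ^ 2) w1 = Y := by rw [hw1, tpow, show 2 + (k - 2) = k from by omega]
  have t2w2 : (τ ^ 2) w2 = 0 := by rw [hw2, tpow]; exact hzero _ (by omega)
  have t2Y : (τ ^ 2) Y = 0 := by rw [hYdef, tpow]; exact hzero _ (by omega)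
  have t1w2 : (τ ^ 1) w2 = Y := by rw [hw2, tpow, show 1 + (k - 1) = k from by omega]
  have t1Y : (τ ^ 1) Y = 0 := by rw [hYdef, tpow]; exact hzero _ (by omega)
  -- the injection
  set F : V2 × ZMod 2 → V2 := fun p =>
    (p.1.1).val • w0 + ((p.1.2.1).val • w1 + ((p.1.2.2).val • w2 + (p.2).val • Y)) with hF
  have happ : ∀ (f : AddMonoid.End V2) (p : V2 × ZMod 2),
      f (F p) = (p.1.1).val • f w0 +
        ((p.1.2.1).val • f w1 + ((p.1.2.2).val • f w2 + (p.2).val • f Y)) := by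
    intro f p
    rw [hF]
    simp only []
    rw [map_add, map_add, map_add, map_nsmul, map_nsmul, map_nsmul, map_nsmul]
  have hinj : Function.Injective F := by
    intro p q hpq
    have h3 : (τ ^ 3) (F p) = (τ ^ 3) (F q) := by rw [hpq]
    rw [happ, happ, t3w0, t3w1, t3w2, t3Y] at h3
    simp only [smul_zero, add_zero] at h3
    have e1 : p.1.1 = q.1.1 := sc_inj hknz h3
    have hpq1 : (p.1.2.1).val • w1 + ((p.1.2.2).val • w2 + (p.2).val • Y) =
        (q.1.2.1).val • w1 + ((q.1.2.2).val • w2 + (q.2).val • Y) := by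
      have h := hpq
      rw [hF] at h
      simp only at h
      rw [e1] at h
      exact add_left_cancel h
    have h2 : (τ ^ 2) ((p.1.2.1).val • w1 + ((p.1.2.2).val • w2 + (p.2).val • Y)) =
        (τ ^ 2) ((q.1.2.1).val • w1 + ((q.1.2.2).val • w2 + (q.2).val • Y)) := by rw [hpq1]
    simp only [map_add, map_nsmul, t2w1, t2w2, t2Y, smul_zero, add_zero] at h2
    have e2 : p.1.2.1 = q.1.2.1 := sc_inj hknz h2
    have hpq2 : (p.1.2.2).val • w2 + (p.2).val • Y =
        (q.1.2.2).val • w2 + (q.2).val • Y := by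
      rw [e2] at hpq1
      exact add_left_cancel hpq1
    have h1 : (τ ^ 1) ((p.1.2.2).val • w2 + (p.2).val • Y) =
        (τ ^ 1) ((q.1.2.2).val • w2 + (q.2).val • Y) := by rw [hpq2]
    simp only [map_add, map_nsmul, t1w2, t1Y, smul_zero, add_zero] at h1
    have e3 : p.1.2.2 = q.1.2.2 := sc_inj hknz h1
    have hpq3 : (p.2).val • Y = (q.2).val • Y := by
      rw [e3] at hpq2
      exact add_left_cancel hpq2
    have e4 : p.2 = q.2 := sc_inj hknz hpq3
    have e5 : p.1 = q.1 := Prod.ext e1 (Prod.ext e2 e3)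
    exact Prod.ext e5 e4
  have hcard := Fintype.card_le_of_injective F hinj
  have c1 : Fintype.card (V2 × ZMod 2) = 16 := by
    simp [Fintype.card_prod, ZMod.card]
  have c2 : Fintype.card V2 = 8 := by
    simp [Fintype.card_prod, ZMod.card]
  omega

lemma hard (hm : 3 ≤ m) (A : AddAut (Nm m)) (hA : A ^ (2 ^ (m + 1)) = 1) (x : Nm m) :
    ∃ t, (A ^ 4) x = x + ((0 : ZMod 2), (0 : ZMod 2), 2 * t) := by
  have hK : ∀ v, ((tauE hm A) ^ (2 ^ (m + 1))) v = 0 := by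
    intro v
    have h1 := Abar_id hm A hA v
    have h2 := tau_pow hm A (m + 1) v
    rw [h1] at h2
    exact (left_eq_add.mp h2)
  have h3 := tau_cube_zero (tauE hm A) _ hK
  have h4 : ∀ v, ((Abar hm A) ^ 4) v = v := by
    intro v
    have h5 : ((Abar hm A) ^ 4) v = v + ((tauE hm A) ^ 4) v := tau_pow hm A 2 v
    have h6 : ((tauE hm A) ^ 4) v = 0 := by
      rw [show (4 : ℕ) = 3 + 1 from rfl, pow_add, pow_one, endMul]
      exact h3 _
    rw [h5, h6, add_zero]
  have h0 : pV hm ((A ^ 4) x - x) = 0 := by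
    rw [map_sub, pV_comm_pow hm A 4 x, h4, sub_self]
  obtain ⟨t, ht⟩ := pV_eq_zero hm h0
  exact ⟨t, by rw [← ht]; abel⟩

lemma pow4_closed (hm : 3 ≤ m) (A : AddAut (Nm m)) (hA : A ^ (2 ^ (m + 1)) = 1) :
    ∀ (s : ℕ) (x : Nm m), ∃ t, ((A ^ 4) ^ s) x = x + ((0 : ZMod 2), (0 : ZMod 2), 2 * t) := by
  intro s
  induction s with
  | zero =>
    intro x
    exact ⟨0, by simp⟩
  | succ s ih =>
    intro x
    obtain ⟨t0, h0⟩ := hard hm A hA x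
    obtain ⟨t1, h1⟩ := ih x
    have h2 : ((A ^ 4) ^ s) (((0 : ZMod 2), (0 : ZMod 2), 2 * t0) : Nm m) =
        (0, 0, 2 * (t0 * gam A ^ (4 * s))) := by
      rw [← pow_mul]
      exact pow_apply_D A (4 * s) t0
    refine ⟨t1 + t0 * gam A ^ (4 * s), ?_⟩
    rw [pow_succ, autMul, h0, map_add, h1, h2, add_assoc, add_third]
    congr 2
    ring_nf

lemma step_top (hm : 3 ≤ m) (A : AddAut (Nm m)) (hA : A ^ (2 ^ (m + 1)) = 1)
    (k : ℕ) (hk : 2 ≤ k) (x : Nm m) :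
    ∃ t, x + (A ^ (2 ^ k)) x = ((0 : ZMod 2), (0 : ZMod 2), 2 * t) := by
  have h1 : (2 : ℕ) ^ k = 4 * 2 ^ (k - 2) := by
    have h : (2 : ℕ) ^ (2 + (k - 2)) = 2 ^ k := by congr 1; omega
    rw [← h, pow_add]; norm_num
  rw [h1, pow_mul]
  obtain ⟨t, ht⟩ := pow4_closed hm A hA (2 ^ (k - 2)) x
  rw [ht]
  refine ⟨x.2.2 + t, ?_⟩
  rw [← add_assoc, double_eq, add_third]
  simp only [Prod.mk.injEq, true_and]
  ring

lemma step_deep (hm : 3 ≤ m) (A : AddAut (Nm m)) (s j : ℕ) (hj : 1 ≤ j) (x : Nm m)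
    (hx : ∃ t, x = ((0 : ZMod 2), (0 : ZMod 2), (2 : ZMod (2 ^ m)) ^ j * t)) :
    ∃ t, x + (A ^ s) x = ((0 : ZMod 2), (0 : ZMod 2), (2 : ZMod (2 ^ m)) ^ (j + 1) * t) := by
  obtain ⟨t, rfl⟩ := hx
  obtain ⟨δ, hδ⟩ := odd_pow (gam_odd hm A) s
  have hsplit : (2 : ZMod (2 ^ m)) ^ j = 2 * 2 ^ (j - 1) := by
    have h : (2 : ZMod (2 ^ m)) ^ (1 + (j - 1)) = 2 ^ j := by congr 1; omega
    rw [← h, pow_add, pow_one]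
  have hsplit2 : (2 : ZMod (2 ^ m)) ^ (j + 1) = 2 ^ (j - 1) * 4 := by
    have h : (2 : ZMod (2 ^ m)) ^ ((j - 1) + 2) = 2 ^ (j + 1) := by congr 1; omega
    rw [← h, pow_add]; norm_num
  refine ⟨t * (δ + 1), ?_⟩
  rw [hsplit, mul_assoc, pow_apply_D A s (2 ^ (j - 1) * t), add_third]
  simp only [Prod.mk.injEq, true_and]
  rw [hδ, hsplit2]
  ring

lemma sig_base (hm : 3 ≤ m) (A : AddAut (Nm m)) (t : ZMod (2 ^ m)) :
    ∑ i ∈ Finset.range 4,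
      (A ^ i) (((0 : ZMod 2), (0 : ZMod 2), (2 : ZMod (2 ^ m)) ^ (m - 2) * t) : Nm m) = 0 := by
  obtain ⟨δ, hδ⟩ := gam_odd hm A
  have hsplit : (2 : ZMod (2 ^ m)) ^ (m - 2) = 2 * 2 ^ (m - 3) := by
    have h : (2 : ZMod (2 ^ m)) ^ (1 + (m - 3)) = 2 ^ (m - 2) := by congr 1; omega
    rw [← h, pow_add, pow_one]
  have hc : (2 : ZMod (2 ^ m)) ^ (m - 3) * 8 = 0 := by
    have h1 : (2 : ZMod (2 ^ m)) ^ ((m - 3) + 3) = 2 ^ m := by congr 1; omega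
    have h2 := two_pow_eq_zero (m := m)
    rw [← h1, pow_add] at h2
    norm_num at h2
    exact h2
  rw [Finset.sum_range_succ, Finset.sum_range_succ, Finset.sum_range_succ,
    Finset.sum_range_succ, Finset.sum_range_zero, zero_add]
  rw [hsplit, mul_assoc, pow_apply_D A 0, pow_apply_D A 1, pow_apply_D A 2, pow_apply_D A 3,
    add_third, add_third, add_third]
  have h0 : (0 : Nm m) = ((0 : ZMod 2), (0 : ZMod 2), (0 : ZMod (2 ^ m))) := rfl
  rw [h0, Prod.mk.injEq, Prod.mk.injEq]
  refine ⟨rfl, rfl, ?_⟩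
  rw [hδ]
  linear_combination (t * (1 + 3 * δ + 4 * δ ^ 2 + 2 * δ ^ 3)) * hc

lemma cl_base (hm : 3 ≤ m) (A : AddAut (Nm m)) (t : ZMod (2 ^ m)) :
    (A ^ 4) (((0 : ZMod 2), (0 : ZMod 2), (2 : ZMod (2 ^ m)) ^ (m - 2) * t) : Nm m) =
      ((0 : ZMod 2), (0 : ZMod 2), (2 : ZMod (2 ^ m)) ^ (m - 2) * t) := by
  obtain ⟨δ, hδ⟩ := gam_odd hm A
  have hsplit : (2 : ZMod (2 ^ m)) ^ (m - 2) = 2 * 2 ^ (m - 3) := by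
    have h : (2 : ZMod (2 ^ m)) ^ (1 + (m - 3)) = 2 ^ (m - 2) := by congr 1; omega
    rw [← h, pow_add, pow_one]
  have hc : (2 : ZMod (2 ^ m)) ^ (m - 3) * 8 = 0 := by
    have h1 : (2 : ZMod (2 ^ m)) ^ ((m - 3) + 3) = 2 ^ m := by congr 1; omega
    have h2 := two_pow_eq_zero (m := m)
    rw [← h1, pow_add] at h2
    norm_num at h2
    exact h2
  rw [hsplit, mul_assoc, pow_apply_D A 4]
  simp only [Prod.mk.injEq, true_and]
  rw [hδ]
  linear_combination (t * (4 * δ ^ 4 + 8 * δ ^ 3 + 6 * δ ^ 2 + 2 * δ)) * hc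

lemma rec_sum (A : AddAut (Nm m)) (k : ℕ) (y : Nm m) :
    ∑ i ∈ Finset.range (2 ^ (k + 1)), (A ^ i) y =
      ∑ i ∈ Finset.range (2 ^ k), (A ^ i) (y + (A ^ (2 ^ k)) y) := by
  have h2 : (2 : ℕ) ^ (k + 1) = 2 ^ k + 2 ^ k := by rw [pow_succ, Nat.mul_two]
  rw [h2, Finset.sum_range_add]
  have h : ∀ i, (A ^ i) (y + (A ^ (2 ^ k)) y) = (A ^ i) y + (A ^ (2 ^ k + i)) y := by
    intro i
    rw [map_add, ← autMul, ← pow_add, Nat.add_comm i (2 ^ k)]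
  rw [Finset.sum_congr rfl (fun i _ => h i)]
  exact (Finset.sum_add_distrib).symm

lemma sig (hm : 3 ≤ m) (A : AddAut (Nm m)) (hA : A ^ (2 ^ (m + 1)) = 1) :
    ∀ k, 2 ≤ k → k ≤ m →
      ∀ y : Nm m,
        (∃ t, y = ((0 : ZMod 2), (0 : ZMod 2), (2 : ZMod (2 ^ m)) ^ (m - k) * t)) →
        ∑ i ∈ Finset.range (2 ^ k), (A ^ i) y = 0 := by
  intro k hk
  induction k, hk using Nat.le_induction with
  | base =>
    intro _ y hy
    obtain ⟨t, rfl⟩ := hy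
    exact sig_base hm A t
  | succ k hk2 ih =>
    intro hkm y hy
    rw [rec_sum A k y]
    apply ih (by omega)
    by_cases hcase : m - (k + 1) = 0
    · obtain ⟨t, ht⟩ := step_top hm A hA k (by omega) y
      refine ⟨t, ?_⟩
      rw [show m - k = 1 from by omega, pow_one]
      exact ht
    · obtain ⟨t, ht⟩ := step_deep hm A (2 ^ k) (m - (k + 1)) (by omega) y hy
      refine ⟨t, ?_⟩
      rw [show m - k = (m - (k + 1)) + 1 from by omega]
      exact ht

lemma sum_zero (hm : 3 ≤ m) (A : AddAut (Nm m)) (hA : A ^ (2 ^ (m + 1)) = 1) (z : Nm m) :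
    ∑ i ∈ Finset.range (2 ^ m), (A ^ i) z = 0 := by
  have he : (2 : ℕ) ^ m = 2 ^ ((m - 1) + 1) := by congr 1; omega
  have hsplit : Finset.range (2 ^ m) = Finset.range (2 ^ ((m - 1) + 1)) := by rw [he]
  rw [hsplit, rec_sum A (m - 1) z]
  apply sig hm A hA (m - 1) (by omega) (by omega)
  obtain ⟨t, ht⟩ := step_top hm A hA (m - 1) (by omega) z
  exact ⟨t, by rw [show m - (m - 1) = 1 from by omega, pow_one]; exact ht⟩

lemma cl (hm : 3 ≤ m) (A : AddAut (Nm m)) (hA : A ^ (2 ^ (m + 1)) = 1) :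
    ∀ k, k ≤ m - 3 →
      ∀ x : Nm m,
        (∃ t, x = ((0 : ZMod 2), (0 : ZMod 2), (2 : ZMod (2 ^ m)) ^ (m - 2 - k) * t)) →
        (A ^ (2 ^ (k + 2))) x = x := by
  intro k
  induction k with
  | zero =>
    intro _ x hx
    obtain ⟨t, rfl⟩ := hx
    simp only [Nat.sub_zero]
    rw [show (2 : ℕ) ^ (0 + 2) = 4 from by norm_num]
    exact cl_base hm A t
  | succ k ih =>
    intro hk x hx
    obtain ⟨t, ht⟩ := step_deep hm A (2 ^ (k + 2)) (m - 2 - (k + 1)) (by omega) x hx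
    have hu : (A ^ (2 ^ (k + 2))) (x + (A ^ (2 ^ (k + 2))) x) = x + (A ^ (2 ^ (k + 2))) x := by
      apply ih (by omega)
      exact ⟨t, by rw [show m - 2 - k = (m - 2 - (k + 1)) + 1 from by omega]; exact ht⟩
    rw [map_add] at hu
    have hpow : (A ^ (2 ^ (k + 2))) ((A ^ (2 ^ (k + 2))) x) = (A ^ (2 ^ (k + 1 + 2))) x := by
      rw [← autMul, ← pow_add]
      have h : (2 : ℕ) ^ (k + 2) + 2 ^ (k + 2) = 2 ^ (k + 1 + 2) :=
        ((pow_succ 2 (k + 2)).trans (Nat.mul_two _)).symm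
      rw [h]
    rw [hpow] at hu
    rw [add_comm x ((A ^ (2 ^ (k + 2))) x)] at hu
    exact add_left_cancel hu

lemma pow2m (hm : 3 ≤ m) (A : AddAut (Nm m)) (hA : A ^ (2 ^ (m + 1)) = 1) (x : Nm m) :
    (A ^ (2 ^ m)) x = x := by
  obtain ⟨t, ht⟩ := step_top hm A hA (m - 1) (by omega) x
  have hu : (A ^ (2 ^ (m - 1))) (x + (A ^ (2 ^ (m - 1))) x) = x + (A ^ (2 ^ (m - 1))) x := by
    have h := cl hm A hA (m - 3) (le_refl _) (x + (A ^ (2 ^ (m - 1))) x)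
      ⟨t, by rw [show m - 2 - (m - 3) = 1 from by omega, pow_one]; exact ht⟩
    rwa [show (m - 3) + 2 = m - 1 from by omega] at h
  rw [map_add] at hu
  have hpow : (A ^ (2 ^ (m - 1))) ((A ^ (2 ^ (m - 1))) x) = (A ^ (2 ^ m)) x := by
    rw [← autMul, ← pow_add]
    have h2 : (2 : ℕ) ^ m = 2 ^ ((m - 1) + 1) := by congr 1; omega
    have h3 : (2 : ℕ) ^ ((m - 1) + 1) = 2 ^ (m - 1) + 2 ^ (m - 1) :=
      (pow_succ 2 (m - 1)).trans (Nat.mul_two _)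
    have h : (2 : ℕ) ^ (m - 1) + 2 ^ (m - 1) = 2 ^ m := (h2.trans h3).symm
    rw [h]
  rw [hpow] at hu
  rw [add_comm x ((A ^ (2 ^ (m - 1))) x)] at hu
  exact add_left_cancel hu

lemma holPhi_apply {N : Type} [AddCommGroup N] (B : AddAut N) (v : Multiplicative N) :
    holPhi N B v = Multiplicative.ofAdd (B (Multiplicative.toAdd v)) := rfl

lemma hol_pow (g : Hol (Nm m)) (k : ℕ) :
    g ^ k = ⟨Multiplicative.ofAdd
        (∑ i ∈ Finset.range k, ((g.right ^ i) (Multiplicative.toAdd g.left))),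
      g.right ^ k⟩ := by
  induction k with
  | zero =>
    simp only [pow_zero, Finset.sum_range_zero, ofAdd_zero]
    rfl
  | succ k ih =>
    rw [pow_succ, ih]
    refine SemidirectProduct.ext ?_ ?_
    · show Multiplicative.ofAdd _ * holPhi _ (g.right ^ k) g.left = _
      rw [holPhi_apply, ← ofAdd_add, Finset.sum_range_succ]
    · show g.right ^ k * g.right = g.right ^ (k + 1)
      rw [← pow_succ]

lemma keyL (hm : 3 ≤ m) (g : Hol (Nm m)) (h : g ^ (2 ^ (m + 1)) = 1) :
    g ^ (2 ^ m) = 1 := by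
  have hA : g.right ^ (2 ^ (m + 1)) = 1 := by
    have h2 : SemidirectProduct.rightHom (g ^ (2 ^ (m + 1))) = 1 := by rw [h, map_one]
    rw [map_pow] at h2
    exact h2
  rw [hol_pow]
  rw [sum_zero hm g.right hA]
  have hp : g.right ^ (2 ^ m) = 1 := by
    apply AddEquiv.ext
    intro x
    rw [pow2m hm g.right hA x]
    rfl
  rw [hp]
  rfl

lemma no_big_order (hm : 3 ≤ m) (x : Hol (Nm m)) : orderOf x ≠ 2 ^ (m + 1) := by
  intro h
  have h1 : x ^ (2 ^ (m + 1)) = 1 := by rw [← h]; exact pow_orderOf_eq_one x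
  have h2 := keyL hm x h1
  have h3 : orderOf x ∣ 2 ^ m := orderOf_dvd_of_pow_eq_one h2
  rw [h] at h3
  have hle := Nat.le_of_dvd (Nat.pow_pos (by norm_num : 0 < 2)) h3
  have hlt : (2 : ℕ) ^ m < 2 ^ (m + 1) := Nat.pow_lt_pow_right (by norm_num) (by omega)
  omega

end Prop81

/-- Proposition 8.1: for `n ≥ 5`, the holomorph of `C₂ × C₂ × C_{2^{n-2}}` contains
no regular quaternion and no regular dihedral subgroup of order `2 ^ n`. -/
theorem no_regular_quaternion_or_dihedral_subgroup_C2_x_C2_x_C2pow (n : ℕ) (hn : 5 ≤ n) :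
    (¬ ∃ G : Subgroup (Hol (ZMod 2 × ZMod 2 × ZMod (2 ^ (n - 2)))),
      IsRegularSubgroup G ∧ Nonempty (G ≃* QuaternionGroup (2 ^ (n - 2)))) ∧
    (¬ ∃ G : Subgroup (Hol (ZMod 2 × ZMod 2 × ZMod (2 ^ (n - 2)))),
      IsRegularSubgroup G ∧ Nonempty (G ≃* DihedralGroup (2 ^ (n - 1)))) := by
  have hm : 3 ≤ n - 2 := by omega
  constructor
  · rintro ⟨G, -, ⟨e⟩⟩
    have h1 : orderOf (QuaternionGroup.a 1 : QuaternionGroup (2 ^ (n - 2))) = 2 ^ (n - 2 + 1) := by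
      rw [QuaternionGroup.orderOf_a_one]
      rw [pow_succ, Nat.mul_comm]
    have h2 : orderOf (G.subtype (e.symm (QuaternionGroup.a 1))) = 2 ^ (n - 2 + 1) := by
      rw [orderOf_injective G.subtype G.subtype_injective]
      rw [show (e.symm (QuaternionGroup.a 1) : G) = e.symm.toMonoidHom (QuaternionGroup.a 1)
        from rfl]
      rw [orderOf_injective e.symm.toMonoidHom e.symm.injective]
      exact h1
    exact Prop81.no_big_order hm _ h2
  · rintro ⟨G, -, ⟨e⟩⟩
    have h1 : orderOf (DihedralGroup.r 1 : DihedralGroup (2 ^ (n - 1))) = 2 ^ (n - 2 + 1) := by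
      rw [DihedralGroup.orderOf_r_one]
      congr 1
      omega
    have h2 : orderOf (G.subtype (e.symm (DihedralGroup.r 1))) = 2 ^ (n - 2 + 1) := by
      rw [orderOf_injective G.subtype G.subtype_injective]
      rw [show (e.symm (DihedralGroup.r 1) : G) = e.symm.toMonoidHom (DihedralGroup.r 1)
        from rfl]
      rw [orderOf_injective e.symm.toMonoidHom e.symm.injective]
      exact h1
    exact Prop81.no_big_order hm _ h2
end
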